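/- Let (A,C,ψ) be an entwining structure. If g: C ⊗ A^{⊗(n+1)} → k satisfies the cyclicity condition g(c ⊗ a₁ ⊗ ... ⊗ a_{n+1}) = (-1)^n g(c^ψ ⊗ a₂ ⊗ ... ⊗ a_{n+1} ⊗ a_{1ψ}), then g satisfies the invariance condition g(c ⊗ a₁ ⊗ ... ⊗ a_{n+1}) = g(c^{ψ^{n+1}} ⊗ a_{1ψ} ⊗ ... ⊗ a_{n+1ψ}). In other words, C_λ^n(A,C,ψ) ⊆ I^n(A,C,ψ). -/

import Mathlib

open TensorProduct

/-- An entwining structure `(A, C, ψ)` over a field `k`: a unital `k`-algebra `A`,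
a counital `k`-coalgebra `C` and a `k`-linear map `ψ : C ⊗ A → A ⊗ C` satisfying the
entwining axioms of Brzeziński–Majid. -/
structure Entwining (k A C : Type) [Field k] [Ring A] [Algebra k A]
    [AddCommGroup C] [Module k C] [Coalgebra k C] : Type where
  ψ : C ⊗[k] A →ₗ[k] A ⊗[k] C
  mul_compat : ψ ∘ₗ TensorProduct.map (LinearMap.id : C →ₗ[k] C) (LinearMap.mul' k A) =
    TensorProduct.map (LinearMap.mul' k A) (LinearMap.id : C →ₗ[k] C)
      ∘ₗ (TensorProduct.assoc k A A C).symm.toLinearMap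
      ∘ₗ TensorProduct.map (LinearMap.id : A →ₗ[k] A) ψ
      ∘ₗ (TensorProduct.assoc k A C A).toLinearMap
      ∘ₗ TensorProduct.map ψ (LinearMap.id : A →ₗ[k] A)
      ∘ₗ (TensorProduct.assoc k C A A).symm.toLinearMap
  comul_compat : TensorProduct.map (LinearMap.id : A →ₗ[k] A)
        (CoalgebraStruct.comul (R := k) (A := C)) ∘ₗ ψ =
    (TensorProduct.assoc k A C C).toLinearMap
      ∘ₗ TensorProduct.map ψ (LinearMap.id : C →ₗ[k] C)
      ∘ₗ (TensorProduct.assoc k C A C).symm.toLinearMap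
      ∘ₗ TensorProduct.map (LinearMap.id : C →ₗ[k] C) ψ
      ∘ₗ (TensorProduct.assoc k C C A).toLinearMap
      ∘ₗ TensorProduct.map (CoalgebraStruct.comul (R := k) (A := C)) (LinearMap.id : A →ₗ[k] A)
  counit_compat : (TensorProduct.rid k A).toLinearMap
      ∘ₗ TensorProduct.map (LinearMap.id : A →ₗ[k] A)
        (CoalgebraStruct.counit (R := k) (A := C)) ∘ₗ ψ =
    (TensorProduct.lid k A).toLinearMap
      ∘ₗ TensorProduct.map (CoalgebraStruct.counit (R := k) (A := C)) (LinearMap.id : A →ₗ[k] A)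
  unit_compat : ∀ c : C, ψ (c ⊗ₜ[k] (1 : A)) = (1 : A) ⊗ₜ[k] c

variable {k A C : Type}

/-- `IterRep e m c v ι γ β` says that `Σ_{s : ι} (β s) ⊗ (γ s)` is a representation of
the `m`-fold iterated entwining `c^{ψ^m} ⊗ v_{1ψ} ⊗ ⋯ ⊗ v_{mψ}`, obtained by applying
`ψ` successively: first to `(c, v 0)`, then to the resulting coalgebra elements and
`v 1`, and so on. -/
inductive IterRep [Field k] [Ring A] [Algebra k A] [AddCommGroup C] [Module k C]
    [Coalgebra k C] (e : Entwining k A C) :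
    (m : ℕ) → C → (Fin m → A) → (ι : Type) → (ι → C) → (ι → (Fin m → A)) → Prop
  | zero (c : C) :
      IterRep e 0 c Fin.elim0 PUnit (fun _ => c) (fun _ => Fin.elim0)
  | succ {m : ℕ} (c : C) (v : Fin (m + 1) → A) (ι₀ : Type) [Fintype ι₀]
      (α : ι₀ → A) (γ₀ : ι₀ → C)
      (h : e.ψ (c ⊗ₜ[k] v 0) = ∑ i, α i ⊗ₜ[k] γ₀ i)
      (κ : ι₀ → Type) (γ : (i : ι₀) → κ i → C) (β : (i : ι₀) → κ i → (Fin m → A))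
      (hs : ∀ i : ι₀, IterRep e m (γ₀ i) (fun j => v j.succ) (κ i) (γ i) (β i)) :
      IterRep e (m + 1) c v ((i : ι₀) × κ i) (fun p => γ p.1 p.2)
        (fun p => Fin.cons (α p.1) (β p.1 p.2))

/-- `g ∈ ℐ^{m-1}(A,C,ψ)`: the functional `g : C ⊗ A^{⊗m} → k` is invariant, i.e.
`g(c ⊗ a₁ ⊗ ⋯ ⊗ a_m) = g(c^{ψ^m} ⊗ a_{1ψ} ⊗ ⋯ ⊗ a_{mψ})`, stated via arbitrary
representations of the iterated entwining. -/
def EntwInvariant [Field k] [Ring A] [Algebra k A] [AddCommGroup C] [Module k C]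
    [Coalgebra k C] (e : Entwining k A C) {m : ℕ}
    (g : C →ₗ[k] MultilinearMap k (fun _ : Fin m => A) k) : Prop :=
  ∀ (c : C) (v : Fin m → A) (ι : Type) [Fintype ι] (γ : ι → C) (β : ι → (Fin m → A)),
    IterRep e m c v ι γ β → g c v = ∑ s, g (γ s) (β s)

/-- `g ∈ 𝒞ⁿ_λ(A,C,ψ)`: the functional `g : C ⊗ A^{⊗(n+1)} → k` satisfies the cyclicity
condition `g(c ⊗ a₁ ⊗ … ⊗ a_{n+1}) = (-1)ⁿ g(c^ψ ⊗ a₂ ⊗ … ⊗ a_{n+1} ⊗ a_{1ψ})`,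
stated via arbitrary representations `ψ(c ⊗ a₁) = Σᵢ αᵢ ⊗ γᵢ`. -/
def EntwIsCyclic [Field k] [Ring A] [Algebra k A] [AddCommGroup C] [Module k C]
    [Coalgebra k C] (e : Entwining k A C) (n : ℕ)
    (g : C →ₗ[k] MultilinearMap k (fun _ : Fin (n + 1) => A) k) : Prop :=
  ∀ (c : C) (v : Fin (n + 1) → A) (t : ℕ) (α : Fin t → A) (γ : Fin t → C),
    e.ψ (c ⊗ₜ[k] v 0) = ∑ i, α i ⊗ₜ[k] γ i →
    g c v = (-1 : k) ^ n *
      ∑ i, g (γ i) (Function.update (fun j : Fin (n + 1) => v (j + 1)) (Fin.last n) (α i))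

/-- After `m` cyclic rotations (with entwining) of the arguments `v`, with the `m`
already-entwined elements given by `b`. -/
def rotArgs [Ring A] (n m : ℕ) (v : Fin (n + 1) → A) (b : Fin m → A) :
    Fin (n + 1) → A :=
  fun j => if h : (j : ℕ) + m < n + 1 then v ⟨(j : ℕ) + m, h⟩
    else b ⟨(j : ℕ) + m - (n + 1), by have := j.isLt; omega⟩

theorem key_cyclic_iter
    [Field k] [Ring A] [Algebra k A] [AddCommGroup C] [Module k C] [Coalgebra k C]
    (e : Entwining k A C) (n : ℕ)
    (g : C →ₗ[k] MultilinearMap k (fun _ : Fin (n + 1) => A) k)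
    (hg : EntwIsCyclic e n g) {m : ℕ} (c : C) (w : Fin m → A) (ι : Type)
    (γ : ι → C) (β : ι → Fin m → A) (h : IterRep e m c w ι γ β) :
    ∀ (hm : m ≤ n + 1) (v : Fin (n + 1) → A) (inst : Fintype ι),
      (∀ j : Fin m, w j = v (Fin.castLE hm j)) →
      g c v = (-1 : k) ^ (n * m) *
        (@Finset.sum ι k _ (@Finset.univ ι inst) fun s => g (γ s) (rotArgs n m v (β s))) := by
  induction h with
  | zero c =>
    intro hm v inst _
    letI := inst
    have hrw : rotArgs n 0 v Fin.elim0 = v := by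
      funext j
      simp only [rotArgs]
      rw [dif_pos (by have := j.isLt; omega)]
      exact congrArg v (Fin.ext (by simp))
    simp [hrw]
  | succ c w ι₀ α γ₀ hrep κ γ β hs IH =>
    rename_i m instι₀
    intro hm v inst hw
    letI := inst
    haveI hκfin : ∀ i : ι₀, Fintype (κ i) := by
      intro i
      haveI : Finite ((i : ι₀) × κ i) := Finite.of_fintype _
      haveI : Finite (κ i) := Finite.of_injective (Sigma.mk i) sigma_mk_injective
      exact Fintype.ofFinite _
    have hm' : m ≤ n + 1 := le_trans (Nat.le_succ m) hm
    have hmn : m ≤ n := Nat.lt_succ_iff.mp hm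
    -- apply cyclicity once
    set t := Fintype.card ι₀ with ht
    obtain ⟨eqv⟩ : Nonempty (ι₀ ≃ Fin t) := ⟨Fintype.equivFin ι₀⟩
    have h0 : w 0 = v 0 := by
      rw [hw 0]; exact congrArg v (Fin.ext (by simp))
    have hrep' : e.ψ (c ⊗ₜ[k] v 0) = ∑ i : Fin t, α (eqv.symm i) ⊗ₜ[k] γ₀ (eqv.symm i) := by
      rw [← h0, hrep]
      exact (Equiv.sum_comp eqv.symm fun i => α i ⊗ₜ[k] γ₀ i).symm
    have step1 := hg c v t (fun i => α (eqv.symm i)) (fun i => γ₀ (eqv.symm i)) hrep'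
    rw [Equiv.sum_comp eqv.symm
      (fun i => g (γ₀ i) (Function.update (fun j : Fin (n + 1) => v (j + 1))
        (Fin.last n) (α i)))] at step1
    -- the rotated argument vector for branch `i`
    set v' : ι₀ → Fin (n + 1) → A := fun i =>
      Function.update (fun j : Fin (n + 1) => v (j + 1)) (Fin.last n) (α i) with hv'
    -- apply the inductive hypothesis to each branch
    have hIH : ∀ i : ι₀, g (γ₀ i) (v' i) = (-1 : k) ^ (n * m) *
        ∑ s : κ i, g (γ i s) (rotArgs n m (v' i) (β i s)) := by
      intro i
      refine IH i hm' (v' i) (hκfin i) ?_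
      intro j
      have hjne : Fin.castLE hm' j ≠ Fin.last n := by
        intro hj
        have := congrArg Fin.val hj
        simp only [Fin.coe_castLE, Fin.val_last] at this
        omega
      show w j.succ = v' i (Fin.castLE hm' j)
      have h2 : v' i (Fin.castLE hm' j) = v (Fin.castLE hm' j + 1) := by
        simp only [hv']
        exact Function.update_of_ne hjne _ _
      rw [h2, hw j.succ]
      congr 1
      apply Fin.ext
      simp only [Fin.coe_castLE, Fin.val_add_one_of_lt (by
        show (Fin.castLE hm' j : ℕ) < n
        simp only [Fin.coe_castLE]; omega), Fin.val_succ]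
    -- the rotated arguments agree
    have hrot : ∀ (i : ι₀) (s : κ i),
        rotArgs n m (v' i) (β i s) = rotArgs n (m + 1) v (Fin.cons (α i) (β i s)) := by
      intro i s
      funext j
      have hj := j.isLt
      simp only [rotArgs]
      by_cases h1 : (j : ℕ) + (m + 1) < n + 1
      · rw [dif_pos h1, dif_pos (by omega)]
        have hne : (⟨(j : ℕ) + m, by omega⟩ : Fin (n + 1)) ≠ Fin.last n :=
          fun hc => by have := congrArg Fin.val hc; simp at this; omega
        simp only [hv']
        rw [Function.update_of_ne hne]
        congr 1
        apply Fin.ext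
        simp [Fin.val_add_one_of_lt (show ((⟨(j : ℕ) + m, by omega⟩ : Fin (n+1)) : ℕ) < n by
          simp; omega)]
        omega
      · rw [dif_neg h1]
        by_cases h2 : (j : ℕ) + m < n + 1
        · -- then j + m = n : we hit the updated last coordinate, value α i
          have hjm : (j : ℕ) + m = n := by omega
          rw [dif_pos h2]
          have : (⟨(j : ℕ) + m, h2⟩ : Fin (n + 1)) = Fin.last n := Fin.ext (by simp [hjm])
          simp only [hv']
          rw [this, Function.update_self]
          have : (⟨(j : ℕ) + (m + 1) - (n + 1), by omega⟩ : Fin (m + 1)) = 0 :=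
            Fin.ext (by simp; omega)
          rw [this, Fin.cons_zero]
        · rw [dif_neg h2]
          have : (⟨(j : ℕ) + (m + 1) - (n + 1), by omega⟩ : Fin (m + 1)) =
              Fin.succ ⟨(j : ℕ) + m - (n + 1), by omega⟩ := Fin.ext (by simp; omega)
          rw [this, Fin.cons_succ]
    -- assemble
    rw [step1]
    have : ∀ i : ι₀, g (γ₀ i) (v' i) = (-1 : k) ^ (n * m) *
        ∑ s : κ i, g (γ i s) (rotArgs n (m + 1) v (Fin.cons (α i) (β i s))) := by
      intro i
      rw [hIH i]
      congr 1
      exact Finset.sum_congr rfl fun s _ => by rw [hrot i s]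
    rw [Finset.sum_congr rfl fun i _ => this i]
    rw [← Finset.mul_sum, ← mul_assoc, ← pow_add]
    have hpow : n + n * m = n * (m + 1) := by ring
    rw [hpow]
    congr 1
    letI instSig : Fintype ((i : ι₀) × κ i) := Sigma.instFintype
    rw [Subsingleton.elim inst instSig]
    exact (Finset.sum_sigma Finset.univ (fun i => Finset.univ)
      (fun p => g (γ p.1 p.2) (rotArgs n (m + 1) v (Fin.cons (α p.1) (β p.1 p.2))))).symm

/-- Every cyclic cochain is invariant: `𝒞ⁿ_λ(A,C,ψ) ⊆ ℐⁿ(A,C,ψ)`. -/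
theorem cyclic_subset_invariant
    [Field k] [Ring A] [Algebra k A] [AddCommGroup C] [Module k C] [Coalgebra k C]
    (e : Entwining k A C) (n : ℕ)
    (g : C →ₗ[k] MultilinearMap k (fun _ : Fin (n + 1) => A) k)
    (hg : EntwIsCyclic e n g) :
    EntwInvariant e g := by
  intro c v ι inst γ β h
  have := key_cyclic_iter e n g hg c v ι γ β h le_rfl v inst
    (fun j => congrArg v (Fin.ext (by simp)))
  rw [this]
  have hrot : ∀ s : ι, rotArgs n (n + 1) v (β s) = β s := by
    intro s
    funext j
    have hj := j.isLt
    simp only [rotArgs]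
    rw [dif_neg (by omega)]
    congr 1
    exact Fin.ext (by simp)
  have hpow : (-1 : k) ^ (n * (n + 1)) = 1 :=
    Even.neg_one_pow (Nat.even_mul_succ_self n)
  rw [hpow, one_mul]
  exact Finset.sum_congr rfl fun s _ => by rw [hrot s]
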